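/- arXiv:1205.5320 — 3 statements merged into one kernel-verified Lean document; each statement's English description precedes it below -/
import Mathlib

section
/- Let α be a finite type, let n ≥ 1, and for each k ∈ {1,…,n} let p_k, a_k ∈ α with a_k ≠ p_k; define g_k : α → α by g_k(p_k) = a_k and g_k(x) = x for all x ≠ p_k. Set g = g_n ∘ ⋯ ∘ g_1 and read indices modulo n (so p_{n+1} := p_1 and a_{n+1} := a_1). Then the set of periodic points of g has exactly (Fintype.card α) − 1 elements if and only if for every k ∈ {1,…,n} either p_k = p_{k+1} or p_k = a_{k+1}. Moreover, if this condition holds, then the range of g is exactly α \ {p_n}. -/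
open Function Set

set_option linter.unusedSectionVars false

section Helpers
variable {α : Type*} [Fintype α] [DecidableEq α]

lemma my_foldl_comp_apply (L : List (α → α)) (g₀ : α → α) (x : α) :
    (L.foldl (fun acc f => f ∘ acc) g₀) x = L.foldl (fun y f => f y) (g₀ x) := by
  induction L generalizing g₀ with
  | nil => rfl
  | cons f L ih => exact ih (f ∘ g₀)

lemma my_update_out {pk ak : α} (hne : ak ≠ pk) (x : α) :
    Function.update id pk ak x ≠ pk := by
  rcases eq_or_ne x pk with h | h <;> simp [Function.update_apply, h, hne]

lemma my_update_image_univ {pk ak : α} (hne : ak ≠ pk) :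
    Function.update id pk ak '' univ = {pk}ᶜ := by
  ext y
  constructor
  · rintro ⟨x, -, rfl⟩; exact my_update_out hne x
  · intro hy
    rcases eq_or_ne y ak with rfl | h
    · exact ⟨pk, mem_univ _, by simp⟩
    · exact ⟨y, mem_univ _, by simp [Function.update_apply, (show y ≠ pk from hy)]⟩

lemma my_update_step_p {pk ak : α} (hne : ak ≠ pk) :
    Function.update id pk ak '' {pk}ᶜ = {pk}ᶜ ∧
      Set.InjOn (Function.update id pk ak) {pk}ᶜ := by
  constructor
  · ext y
    constructor
    · rintro ⟨x, hx, rfl⟩; exact my_update_out hne x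
    · intro hy; exact ⟨y, hy, by simp [Function.update_apply, (show y ≠ pk from hy)]⟩
  · intro x hx y hy hxy
    simp only [mem_compl_iff, mem_singleton_iff] at hx hy
    simpa [Function.update_apply, hx, hy] using hxy

lemma my_update_step_a {pk ak : α} (hne : ak ≠ pk) :
    Function.update id pk ak '' {ak}ᶜ = {pk}ᶜ ∧
      Set.InjOn (Function.update id pk ak) {ak}ᶜ := by
  constructor
  · ext y
    constructor
    · rintro ⟨x, hx, rfl⟩; exact my_update_out hne x
    · intro hy
      by_cases h : y = ak
      · subst h
        refine ⟨pk, ?_, by simp⟩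
        simp only [mem_compl_iff, mem_singleton_iff]
        exact fun hc => hne hc.symm
      · exact ⟨y, h, by simp [Function.update_apply, (show y ≠ pk from hy)]⟩
  · intro x hx y hy hxy
    simp only [mem_compl_iff, mem_singleton_iff] at hx hy
    by_cases hx' : x = pk
    · by_cases hy' : y = pk
      · rw [hx', hy']
      · exfalso
        rw [hx', Function.update_self, Function.update_of_ne hy'] at hxy
        exact hy (by simpa using hxy.symm)
    · by_cases hy' : y = pk
      · exfalso
        rw [hy', Function.update_self, Function.update_of_ne hx'] at hxy
        exact hx (by simpa using hxy)
      · rw [Function.update_of_ne hx', Function.update_of_ne hy'] at hxy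
        exact hxy

lemma my_update_step {pk ak q : α} (hne : ak ≠ pk) (hq : q = pk ∨ q = ak) :
    Function.update id pk ak '' {q}ᶜ = {pk}ᶜ ∧
      Set.InjOn (Function.update id pk ak) {q}ᶜ := by
  rcases hq with rfl | rfl
  · exact my_update_step_p hne
  · exact my_update_step_a hne

lemma my_update_collapse {pk ak : α} (hne : ak ≠ pk) {T : Set α} (haT : ak ∈ T) :
    Function.update id pk ak '' T = Function.update id pk ak '' (T \ {pk}) := by
  apply Set.Subset.antisymm
  · rintro y ⟨x, hx, rfl⟩
    rcases eq_or_ne x pk with rfl | h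
    · exact ⟨ak, ⟨haT, hne⟩, by simp [Function.update_apply, hne]⟩
    · exact ⟨x, ⟨hx, h⟩, rfl⟩
  · exact Set.image_mono (diff_subset)

lemma my_ncard_compl_singleton (q : α) :
    ({q}ᶜ : Set α).ncard = Fintype.card α - 1 := by
  rw [compl_eq_univ_diff, Set.ncard_diff_singleton_of_mem (mem_univ q), Set.ncard_univ,
    Nat.card_eq_fintype_card]

lemma my_mem_periodicPts_of_bijOn {f : α → α} {S : Set α} (h : Set.BijOn f S S) :
    S ⊆ Function.periodicPts f := by
  intro x hx
  have hres : Function.Injective (h.mapsTo.restrict f S S) :=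
    (Set.MapsTo.restrict_inj h.mapsTo).2 h.injOn
  have hbij : Function.Bijective (h.mapsTo.restrict f S S) :=
    (Finite.injective_iff_bijective).1 hres
  set e : Equiv.Perm S := Equiv.ofBijective _ hbij with he
  have hiter : ∀ (j : ℕ) (y : S), f^[j] (y : α) = ((⇑e)^[j] y : α) := by
    intro j
    induction j with
    | zero => intro y; rfl
    | succ j ih =>
      intro y
      rw [Function.iterate_succ_apply', Function.iterate_succ_apply', ih]
      rfl
  refine ⟨orderOf e, orderOf_pos e, ?_⟩
  show f^[orderOf e] x = x
  have := hiter (orderOf e) ⟨x, hx⟩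
  rw [this, Equiv.Perm.iterate_eq_pow, pow_orderOf_eq_one]
  rfl

end Helpers

open Function Set


/-- Let `α` be a finite type and, for each `k : Fin (n+1)`, let
`g k = Function.update id (p k) (a k)` (the map sending `p k` to `a k` and fixing
everything else, where `a k ≠ p k`).  Let `g = g_n ∘ ⋯ ∘ g_0` and read indices
cyclically (`Fin (n+1)` addition).  Then `g` has exactly `card α - 1` periodic
points iff for every `k` either `p k = p (k+1)` or `p k = a (k+1)`; moreover, if
this condition holds then the range of `g` is exactly `α \ {p (last index)}`. -/
theorem stmt0 {α : Type*} [Fintype α] [DecidableEq α] (n : ℕ)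
    (p a : Fin (n + 1) → α) (ha : ∀ k, a k ≠ p k) (g : α → α)
    (hg : g = (List.ofFn fun k : Fin (n + 1) =>
        Function.update (id : α → α) (p k) (a k)).foldl (fun acc f => f ∘ acc) id) :
    (((Function.periodicPts g).ncard = Fintype.card α - 1) ↔
      ∀ k : Fin (n + 1), p k = p (k + 1) ∨ p k = a (k + 1)) ∧
    ((∀ k : Fin (n + 1), p k = p (k + 1) ∨ p k = a (k + 1)) →
      Set.range g = {p (Fin.last n)}ᶜ) := by
  set gs : Fin (n + 1) → α → α :=
    fun k => Function.update (id : α → α) (p k) (a k) with hgs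
  set L : List (α → α) := List.ofFn gs with hL
  set A : ℕ → α → α := fun j x => (L.take j).foldl (fun y f => f y) x with hA
  set Sc : Set α := {p (Fin.last n)}ᶜ with hSc
  have hlen : L.length = n + 1 := by simp [hL]
  have hA0 : A 0 = id := by funext x; simp [hA]
  have hAsucc : ∀ j (hj : j < n + 1), A (j + 1) = gs ⟨j, hj⟩ ∘ A j := by
    intro j hj
    funext x
    have hjL : j < L.length := by omega
    have hLj : L[j] = gs ⟨j, hj⟩ := by
      have := List.getElem_ofFn (f := gs) (i := j) (by simpa [hL] using hjL)
      simpa [hL] using this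
    have h1 : L.take (j + 1) = L.take j ++ [gs ⟨j, hj⟩] := by
      rw [List.take_succ, List.getElem?_eq_getElem hjL, hLj]
      rfl
    simp [hA, h1, List.foldl_append]
  have hgA : g = A (n + 1) := by
    funext x
    rw [hg, my_foldl_comp_apply]
    have h2 : L.take (n + 1) = L := List.take_of_length_le (le_of_eq hlen)
    simp only [hA, h2]
    rfl
  have hout : ∀ (k : Fin (n + 1)) x, gs k x ≠ p k := fun k x => my_update_out (ha k) x
  have hlastmk : (Fin.last n : Fin (n + 1)) = ⟨n, Nat.lt_succ_self n⟩ := rfl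
  have hlastadd : (Fin.last n : Fin (n + 1)) + 1 = 0 := by
    apply Fin.ext
    rw [Fin.val_add_one]
    simp
  have hfinsucc : ∀ (j : ℕ) (hj : j < n),
      (⟨j, Nat.lt_succ_of_lt hj⟩ : Fin (n + 1)) + 1 = ⟨j + 1, Nat.succ_lt_succ hj⟩ := by
    intro j hj
    apply Fin.ext
    rw [Fin.val_add_one, if_neg]
    intro hcon
    have : j = n := by simpa [Fin.last, Fin.ext_iff] using hcon
    omega
  have hglast : ∀ x, g x ≠ p (Fin.last n) := by
    intro x
    rw [hgA, hAsucc n (Nat.lt_succ_self n)]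
    exact hout ⟨n, Nat.lt_succ_self n⟩ (A n x)
  -- Forward chain, assuming the condition
  have key1 : (∀ k : Fin (n + 1), p k = p (k + 1) ∨ p k = a (k + 1)) →
      Set.range g = Sc ∧ g '' Sc = Sc ∧ Set.InjOn g Sc := by
    intro hcond
    have chain : ∀ j (hj : j ≤ n),
        A (j + 1) '' Set.univ = {p ⟨j, Nat.lt_succ_of_le hj⟩}ᶜ ∧
        A (j + 1) '' Sc = {p ⟨j, Nat.lt_succ_of_le hj⟩}ᶜ ∧
        Set.InjOn (A (j + 1)) Sc := by
      intro j
      induction j with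
      | zero =>
        intro hj
        have hA1 : A 1 = gs 0 := by
          rw [hAsucc 0 (Nat.succ_pos n), hA0]
          rfl
        have h0 : (⟨0, Nat.lt_succ_of_le hj⟩ : Fin (n + 1)) = 0 := rfl
        have hc := hcond (Fin.last n)
        rw [hlastadd] at hc
        obtain ⟨himg, hinj⟩ := my_update_step (ha 0) hc
        rw [hA1, h0]
        exact ⟨my_update_image_univ (ha 0), himg, hinj⟩
      | succ j ih =>
        intro hj
        have hjn : j < n := hj
        obtain ⟨hu, hs, hinj⟩ := ih (le_of_lt hjn)
        have hstep := hAsucc (j + 1) (Nat.succ_lt_succ hjn)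
        have hc := hcond ⟨j, Nat.lt_succ_of_lt hjn⟩
        rw [hfinsucc j hjn] at hc
        obtain ⟨himg, hinjs⟩ := my_update_step (ha ⟨j + 1, Nat.succ_lt_succ hjn⟩) hc
        refine ⟨?_, ?_, ?_⟩
        · rw [hstep, Set.image_comp, hu, himg]
        · rw [hstep, Set.image_comp, hs, himg]
        · rw [hstep]
          refine Set.InjOn.comp hinjs hinj ?_
          intro x hx
          rw [← hs]
          exact Set.mem_image_of_mem _ hx
    obtain ⟨hu, hs, hinj⟩ := chain n le_rfl
    have hIn : (⟨n, Nat.lt_succ_of_le le_rfl⟩ : Fin (n + 1)) = Fin.last n := rfl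
    rw [hIn] at hu hs
    refine ⟨?_, ?_, ?_⟩
    · rw [hgA, ← Set.image_univ, hu, hSc]
    · rw [hgA, hs, hSc]
    · rw [hgA]; exact hinj
  -- Converse: from `g '' Sc = Sc` derive the condition
  have key2 : g '' Sc = Sc → ∀ k : Fin (n + 1), p k = p (k + 1) ∨ p k = a (k + 1) := by
    intro hS
    have hdecomp : ∀ (j : ℕ) (x : α),
        g x = (L.drop j).foldl (fun y f => f y) (A j x) := by
      intro j x
      rw [hgA]
      show (L.take (n + 1)).foldl (fun y f => f y) x = _
      rw [List.take_of_length_le (le_of_eq hlen)]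
      conv_lhs => rw [← List.take_append_drop j L]
      rw [List.foldl_append]
    have hsz : ∀ j : ℕ, Fintype.card α - 1 ≤ (A j '' Sc).ncard := by
      intro j
      have himg : g '' Sc = (fun x => (L.drop j).foldl (fun y f => f y) x) '' (A j '' Sc) := by
        rw [← Set.image_comp]
        exact Set.image_congr' (fun x => hdecomp j x)
      calc Fintype.card α - 1 = Sc.ncard := (my_ncard_compl_singleton _).symm
        _ = ((fun x => (L.drop j).foldl (fun y f => f y) x) '' (A j '' Sc)).ncard := by
            rw [← himg, hS]
        _ ≤ (A j '' Sc).ncard := Set.ncard_image_le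
    have heq : ∀ (j : ℕ) (hj : j ≤ n),
        A (j + 1) '' Sc = {p ⟨j, Nat.lt_succ_of_le hj⟩}ᶜ := by
      intro j hj
      apply Set.eq_of_subset_of_ncard_le
      · rw [hAsucc j (Nat.lt_succ_of_le hj), Set.image_comp]
        rintro y ⟨x, hx, rfl⟩
        exact hout _ x
      · rw [my_ncard_compl_singleton]
        exact hsz (j + 1)
      · exact Set.toFinite _
    have hcard2 : 2 ≤ Fintype.card α :=
      Fintype.one_lt_card_iff.2 ⟨a 0, p 0, ha 0⟩
    intro k
    by_contra hcon
    push_neg at hcon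
    obtain ⟨h1, h2⟩ := hcon
    obtain ⟨j, hj⟩ : ∃ j : ℕ, (k + 1 : Fin (n + 1)).val = j := ⟨_, rfl⟩
    have hjn : j ≤ n := by
      have := (k + 1 : Fin (n + 1)).isLt
      omega
    have hmj : (⟨j, Nat.lt_succ_of_le hjn⟩ : Fin (n + 1)) = k + 1 := by
      apply Fin.ext
      exact hj.symm
    have hinput : A j '' Sc = {p k}ᶜ := by
      rcases Nat.eq_zero_or_pos j with hj0 | hjpos
      · have hk : k = Fin.last n := by
          have hv : (k + 1 : Fin (n + 1)).val = 0 := hj.trans hj0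
          rw [Fin.val_add_one] at hv
          by_contra hne
          rw [if_neg hne] at hv
          omega
        rw [hj0, hA0, Set.image_id, hSc, hk]
      · obtain ⟨j', rfl⟩ : ∃ j', j = j' + 1 := ⟨j - 1, by omega⟩
        have hj'n : j' < n := by omega
        have hkj : (⟨j', Nat.lt_succ_of_lt hj'n⟩ : Fin (n + 1)) = k := by
          have h3 : (⟨j', Nat.lt_succ_of_lt hj'n⟩ : Fin (n + 1)) + 1 = k + 1 := by
            rw [hfinsucc j' hj'n]
            apply Fin.ext
            exact hj.symm
          exact add_right_cancel h3
        rw [heq j' (le_of_lt hj'n), hkj]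
    have hcoll : A (j + 1) '' Sc = gs (k + 1) '' ({p k}ᶜ \ {p (k + 1)}) := by
      rw [hAsucc j (Nat.lt_succ_of_le hjn), Set.image_comp, hinput, hmj]
      exact my_update_collapse (ha (k + 1))
        (by simp only [Set.mem_compl_iff, Set.mem_singleton_iff]
            exact fun hc => h2 (Eq.symm hc))
    have hle : (A (j + 1) '' Sc).ncard ≤ Fintype.card α - 2 := by
      rw [hcoll]
      calc (gs (k + 1) '' (({p k}ᶜ : Set α) \ {p (k + 1)})).ncard
          ≤ (({p k}ᶜ : Set α) \ {p (k + 1)}).ncard := Set.ncard_image_le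
        _ = ({p k}ᶜ : Set α).ncard - 1 :=
            Set.ncard_diff_singleton_of_mem
              (by simp only [Set.mem_compl_iff, Set.mem_singleton_iff]
                  exact fun hc => h1 (Eq.symm hc))
        _ = Fintype.card α - 2 := by rw [my_ncard_compl_singleton]; omega
    have := hsz (j + 1)
    omega
  -- periodic points always lie in Sc
  have hper_sub : Function.periodicPts g ⊆ Sc := by
    intro x hx
    obtain ⟨m, hm, hfix⟩ := hx
    obtain ⟨m', rfl⟩ : ∃ m', m = m' + 1 := ⟨m - 1, by omega⟩
    have hxg : g (g^[m'] x) = x := by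
      rw [← Function.iterate_succ_apply' g m' x]
      exact hfix
    intro hxc
    exact hglast (g^[m'] x) (by rw [hxg]; exact hxc)
  refine ⟨⟨?_, ?_⟩, fun hcond => (key1 hcond).1⟩
  · intro hcount
    apply key2
    have hP : Function.periodicPts g = Sc := by
      apply Set.eq_of_subset_of_ncard_le hper_sub
      rw [hcount, hSc, my_ncard_compl_singleton]
    rw [← hP]
    exact (Function.bijOn_periodicPts g).image_eq
  · intro hcond
    obtain ⟨hrange, hs, hinj⟩ := key1 hcond
    have hbij : Set.BijOn g Sc Sc := by
      refine ⟨?_, hinj, ?_⟩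
      · intro x hx
        rw [← hs]
        exact Set.mem_image_of_mem _ hx
      · intro x hx
        rw [hs]
        exact hx
    have hP : Function.periodicPts g = Sc :=
      Set.Subset.antisymm hper_sub (my_mem_periodicPts_of_bijOn hbij)
    rw [hP, hSc, my_ncard_compl_singleton]
end

section
/- Let α be a finite type, n ≥ 1, and g_1, …, g_n : α → α arbitrary functions. For each k ∈ {1,…,n} set f_k := g_k ∘ ⋯ ∘ g_1 ∘ g_n ∘ ⋯ ∘ g_{k+1} (the cyclic rotation of the composition, with f_n = g_n ∘ ⋯ ∘ g_1). Then for all k, l ∈ {1,…,n}, the number of gates of f_k equals the number of gates of f_l, and the number of periodic points of f_k equals the number of periodic points of f_l. -/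
/-- The set of gates of `f`: the equivalence classes of the relation
`x ~ y ↔ ∃ m ≥ 1, f^[m] x = f^[m] y`. -/
def gates {α : Type*} (f : α → α) : Set (Set α) :=
  {C | ∃ x, C = {y | ∃ m, 0 < m ∧ f^[m] x = f^[m] y}}

/-- `compSeqFn g l k = g k ∘ g (k - 1) ∘ ⋯ ∘ g l` (the identity if `k + 1 ≤ l`). -/
def compSeqFn {α : Type*} (g : ℕ → α → α) (l k : ℕ) : α → α :=
  (List.range (k + 1 - l)).foldl (fun acc t => g (l + t) ∘ acc) id

namespace Stmt2Aux

variable {α : Type*}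

/-- The gate relation. -/
def R (f : α → α) (x y : α) : Prop := ∃ m, 0 < m ∧ f^[m] x = f^[m] y

lemma R_refl (f : α → α) (x : α) : R f x x := ⟨1, one_pos, rfl⟩

lemma R_symm {f : α → α} {x y : α} (h : R f x y) : R f y x := by
  obtain ⟨m, hm, h⟩ := h; exact ⟨m, hm, h.symm⟩

lemma R_trans {f : α → α} {x y z : α} (h1 : R f x y) (h2 : R f y z) : R f x z := by
  obtain ⟨m, hm, h1⟩ := h1
  obtain ⟨p, hp, h2⟩ := h2
  refine ⟨p + m, by omega, ?_⟩
  calc f^[p + m] x = f^[p] (f^[m] x) := Function.iterate_add_apply f p m x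
    _ = f^[p] (f^[m] y) := by rw [h1]
    _ = f^[m] (f^[p] y) := by
        rw [← Function.iterate_add_apply, ← Function.iterate_add_apply, Nat.add_comm]
    _ = f^[m] (f^[p] z) := by rw [h2]
    _ = f^[p + m] z := by rw [← Function.iterate_add_apply, Nat.add_comm]

/-- The gate of `x`. -/
def G (f : α → α) (x : α) : Set α := {y | R f x y}

lemma gates_eq_range (f : α → α) : gates f = Set.range (G f) := by
  ext C
  constructor
  · rintro ⟨x, rfl⟩; exact ⟨x, rfl⟩
  · rintro ⟨x, rfl⟩; exact ⟨x, rfl⟩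

lemma G_eq_iff {f : α → α} {x y : α} : G f x = G f y ↔ R f x y := by
  constructor
  · intro h
    have : y ∈ G f y := R_refl f y
    rw [← h] at this
    exact this
  · intro h
    ext z
    exact ⟨fun hz => R_trans (R_symm h) hz, fun hz => R_trans h hz⟩

lemma semiconj (u v : α → α) (m : ℕ) (x : α) :
    u ((v ∘ u)^[m] x) = (u ∘ v)^[m] (u x) := by
  have h : Function.Semiconj u (v ∘ u) (u ∘ v) := fun x => rfl
  exact (h.iterate_right m) x

lemma R_comp_iff (u v : α → α) (x y : α) :
    R (v ∘ u) x y ↔ R (u ∘ v) (u x) (u y) := by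
  constructor
  · rintro ⟨m, hm, h⟩
    exact ⟨m, hm, by rw [← semiconj, ← semiconj, h]⟩
  · rintro ⟨m, hm, h⟩
    refine ⟨m + 1, by omega, ?_⟩
    have : ∀ w, (v ∘ u)^[m + 1] w = v ((u ∘ v)^[m] (u w)) := by
      intro w
      rw [Function.iterate_add_apply]
      simp only [Function.iterate_one, Function.comp_apply]
      have hsc : Function.Semiconj v (u ∘ v) (v ∘ u) := fun x => rfl
      exact ((hsc.iterate_right m) (u w)).symm
    rw [this, this, h]

lemma exists_R_u [Finite α] (u v : α → α) (z : α) :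
    ∃ x, R (u ∘ v) z (u x) := by
  obtain ⟨i, j, hij, h⟩ := Finite.exists_ne_map_eq_of_infinite (fun m : ℕ => (u ∘ v)^[m] z)
  wlog hlt : i < j generalizing i j
  · exact this j i hij.symm h.symm (by omega)
  -- (u∘v)^[i] z = (u∘v)^[j] z, so z ~ (u∘v)^[j-i] z
  set m := j - i with hm
  refine ⟨(v ∘ u)^[m - 1] (v z), ?_⟩
  have hux : u ((v ∘ u)^[m - 1] (v z)) = (u ∘ v)^[m] z := by
    calc u ((v ∘ u)^[m - 1] (v z)) = (u ∘ v)^[m - 1] (u (v z)) :=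
          semiconj u v (m - 1) (v z)
      _ = (u ∘ v)^[m - 1] ((u ∘ v) z) := rfl
      _ = (u ∘ v)^[m - 1 + 1] z := (Function.iterate_succ_apply (u ∘ v) (m - 1) z).symm
      _ = (u ∘ v)^[m] z := by rw [show m - 1 + 1 = m by omega]
  refine ⟨j, by omega, ?_⟩
  rw [hux]
  calc (u ∘ v)^[j] z = (u ∘ v)^[m + i] z := by rw [show m + i = j by omega]
    _ = (u ∘ v)^[m] ((u ∘ v)^[i] z) := Function.iterate_add_apply _ m i z
    _ = (u ∘ v)^[m] ((u ∘ v)^[j] z) := by rw [h]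
    _ = (u ∘ v)^[m + j] z := (Function.iterate_add_apply _ m j z).symm
    _ = (u ∘ v)^[j + m] z := by rw [Nat.add_comm]
    _ = (u ∘ v)^[j] ((u ∘ v)^[m] z) := Function.iterate_add_apply _ j m z

lemma gates_ncard_comp [Finite α] (u v : α → α) :
    (gates (v ∘ u)).ncard = (gates (u ∘ v)).ncard := by
  classical
  set f := v ∘ u
  set f' := u ∘ v
  -- the map on gates
  set Φ : Set α → Set α := fun C => {z | ∃ x ∈ C, R f' z (u x)} with hΦ
  have hΦG : ∀ x, Φ (G f x) = G f' (u x) := by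
    intro x
    ext z
    simp only [hΦ, Set.mem_setOf_eq, G]
    constructor
    · rintro ⟨y, hy, hz⟩
      have : R f' (u x) (u y) := (R_comp_iff u v x y).mp hy
      exact R_trans this (R_symm hz)
    · intro h
      exact ⟨x, R_refl f x, R_symm h⟩
  have hbij : Set.BijOn Φ (gates f) (gates f') := by
    refine ⟨?_, ?_, ?_⟩
    · rintro C ⟨x, rfl⟩
      rw [gates_eq_range]
      exact ⟨u x, (hΦG x).symm⟩
    · rw [gates_eq_range]
      rintro C1 ⟨x, rfl⟩ C2 ⟨y, rfl⟩ h
      rw [hΦG, hΦG] at h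
      rw [G_eq_iff] at h ⊢
      exact (R_comp_iff u v x y).mpr h
    · intro C hC
      rw [gates_eq_range] at hC
      obtain ⟨z, rfl⟩ := hC
      obtain ⟨x, hx⟩ := exists_R_u u v z
      exact ⟨G f x, ⟨x, rfl⟩, by rw [hΦG x]; exact (G_eq_iff.mpr hx).symm⟩
  calc (gates f).ncard = (Φ '' gates f).ncard := (Set.ncard_image_of_injOn hbij.injOn).symm
    _ = (gates f').ncard := by rw [hbij.image_eq]

lemma periodicPts_ncard_comp (u v : α → α) :
    (Function.periodicPts (v ∘ u)).ncard = (Function.periodicPts (u ∘ v)).ncard := by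
  have hbij : Set.BijOn u (Function.periodicPts (v ∘ u)) (Function.periodicPts (u ∘ v)) := by
    refine ⟨?_, ?_, ?_⟩
    · rintro x ⟨m, hm, hx⟩
      refine ⟨m, hm, ?_⟩
      show (u ∘ v)^[m] (u x) = u x
      rw [← semiconj u v m x]
      exact congrArg u hx
    · rintro x ⟨m, hm, hx⟩ y ⟨p, hp, hy⟩ h
      have hx' : (v ∘ u)^[m * p] x = x := hx.mul_const p
      have hy' : (v ∘ u)^[m * p] y = y := hy.const_mul m
      have hN : 0 < m * p := Nat.mul_pos hm hp
      have hfx : ∀ w, (v ∘ u)^[m * p] w = (v ∘ u)^[m * p - 1] (v (u w)) := by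
        intro w
        conv_lhs => rw [show m * p = m * p - 1 + 1 by omega]
        rw [Function.iterate_succ_apply]
        rfl
      calc x = (v ∘ u)^[m * p] x := hx'.symm
        _ = (v ∘ u)^[m * p - 1] (v (u x)) := hfx x
        _ = (v ∘ u)^[m * p - 1] (v (u y)) := by rw [h]
        _ = (v ∘ u)^[m * p] y := (hfx y).symm
        _ = y := hy'
    · rintro z ⟨m, hm, hz⟩
      have hz' : (u ∘ v)^[m] z = z := hz
      have h2 : (v ∘ u)^[m] (v z) = v z := by
        have hsc : Function.Semiconj v (u ∘ v) (v ∘ u) := fun x => rfl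
        have h3 := (hsc.iterate_right m) z
        calc (v ∘ u)^[m] (v z) = v ((u ∘ v)^[m] z) := h3.symm
          _ = v z := congrArg v hz'
      refine ⟨(v ∘ u)^[m - 1] (v z), ⟨m, hm, ?_⟩, ?_⟩
      · show (v ∘ u)^[m] ((v ∘ u)^[m - 1] (v z)) = (v ∘ u)^[m - 1] (v z)
        calc (v ∘ u)^[m] ((v ∘ u)^[m - 1] (v z)) = (v ∘ u)^[m + (m - 1)] (v z) :=
              (Function.iterate_add_apply _ m (m - 1) (v z)).symm
          _ = (v ∘ u)^[m - 1 + m] (v z) := by rw [Nat.add_comm]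
          _ = (v ∘ u)^[m - 1] ((v ∘ u)^[m] (v z)) := Function.iterate_add_apply _ _ _ _
          _ = (v ∘ u)^[m - 1] (v z) := by rw [h2]
      · show u ((v ∘ u)^[m - 1] (v z)) = z
        calc u ((v ∘ u)^[m - 1] (v z)) = (u ∘ v)^[m - 1] (u (v z)) :=
              semiconj u v (m - 1) (v z)
          _ = (u ∘ v)^[m - 1] ((u ∘ v) z) := rfl
          _ = (u ∘ v)^[m - 1 + 1] z := (Function.iterate_succ_apply (u ∘ v) (m - 1) z).symm
          _ = (u ∘ v)^[m] z := by rw [show m - 1 + 1 = m by omega]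
          _ = z := hz'
  calc (Function.periodicPts (v ∘ u)).ncard
      = (u '' Function.periodicPts (v ∘ u)).ncard := (Set.ncard_image_of_injOn hbij.injOn).symm
    _ = (Function.periodicPts (u ∘ v)).ncard := by rw [hbij.image_eq]

/- Peeling lemmas for `compSeqFn`. -/

lemma foldl_comp (h : ℕ → α → α) (L : List ℕ) (a w : α → α) :
    L.foldl (fun acc t => h t ∘ acc) (a ∘ w) =
      (L.foldl (fun acc t => h t ∘ acc) a) ∘ w := by
  induction L generalizing a with
  | nil => rfl
  | cons t L ih =>
    simp only [List.foldl_cons]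
    rw [← Function.comp_assoc, ih]

lemma compSeqFn_top (g : ℕ → α → α) (l k : ℕ) (h : l ≤ k + 1) :
    compSeqFn g l (k + 1) = g (k + 1) ∘ compSeqFn g l k := by
  unfold compSeqFn
  rw [show k + 1 + 1 - l = (k + 1 - l) + 1 by omega, List.range_succ, List.foldl_append]
  simp only [List.foldl_cons, List.foldl_nil]
  rw [show l + (k + 1 - l) = k + 1 by omega]

lemma compSeqFn_bot (g : ℕ → α → α) (l k : ℕ) (h : l ≤ k) :
    compSeqFn g l k = compSeqFn g (l + 1) k ∘ g l := by
  unfold compSeqFn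
  rw [show k + 1 - l = (k - l) + 1 by omega, List.range_succ_eq_map]
  simp only [List.foldl_cons, List.foldl_map, Function.comp_apply, Nat.add_zero]
  rw [show k + 1 - (l + 1) = k - l by omega]
  have : (fun (acc : α → α) (t : ℕ) => g (l + (t + 1)) ∘ acc) =
      fun acc t => g (l + 1 + t) ∘ acc := by
    funext acc t
    rw [show l + (t + 1) = l + 1 + t by omega]
  rw [this, ← foldl_comp (fun t => g (l + 1 + t)) _ id (g l)]
  simp

end Stmt2Aux

open Stmt2Aux in
/-- Let `g 1, …, g n : α → α` be arbitrary functions on a finite type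
(extended periodically by `g (t + n) = g t`), and for `1 ≤ k ≤ n` let
`f_k := g k ∘ ⋯ ∘ g 1 ∘ g n ∘ ⋯ ∘ g (k+1) = compSeqFn g (k+1) (k+n)` be the cyclic
rotations of the composition.  Then all the `f_k` have the same number of gates and the
same number of periodic points. -/
theorem stmt2 {α : Type*} [Fintype α] (n : ℕ) (hn : 0 < n) (g : ℕ → α → α)
    (hper : ∀ t, 1 ≤ t → g (t + n) = g t) :
    ∀ k l, 1 ≤ k → k ≤ n → 1 ≤ l → l ≤ n →
      (gates (compSeqFn g (k + 1) (k + n))).ncard =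
          (gates (compSeqFn g (l + 1) (l + n))).ncard ∧
        (Function.periodicPts (compSeqFn g (k + 1) (k + n))).ncard =
          (Function.periodicPts (compSeqFn g (l + 1) (l + n))).ncard := by
  -- step: f_k and f_{k+1}
  have step : ∀ k : ℕ,
      (gates (compSeqFn g (k + 1) (k + n))).ncard =
          (gates (compSeqFn g (k + 1 + 1) (k + 1 + n))).ncard ∧
        (Function.periodicPts (compSeqFn g (k + 1) (k + n))).ncard =
          (Function.periodicPts (compSeqFn g (k + 1 + 1) (k + 1 + n))).ncard := by
    intro k
    have h1 : compSeqFn g (k + 1) (k + n) =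
        compSeqFn g (k + 2) (k + n) ∘ g (k + 1) :=
      compSeqFn_bot g (k + 1) (k + n) (by omega)
    have h2 : compSeqFn g (k + 2) (k + 1 + n) =
        g (k + 1) ∘ compSeqFn g (k + 2) (k + n) := by
      have := compSeqFn_top g (k + 2) (k + n) (by omega)
      rw [show k + n + 1 = k + 1 + n by omega] at this
      rw [this, hper (k + 1) (by omega)]
    rw [show k + 1 + 1 = k + 2 by ring, h1, h2]
    exact ⟨gates_ncard_comp (g (k + 1)) (compSeqFn g (k + 2) (k + n)),
      periodicPts_ncard_comp (g (k + 1)) (compSeqFn g (k + 2) (k + n))⟩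
  have main : ∀ d k : ℕ,
      (gates (compSeqFn g (k + 1) (k + n))).ncard =
          (gates (compSeqFn g (k + d + 1) (k + d + n))).ncard ∧
        (Function.periodicPts (compSeqFn g (k + 1) (k + n))).ncard =
          (Function.periodicPts (compSeqFn g (k + d + 1) (k + d + n))).ncard := by
    intro d
    induction d with
    | zero => intro k; exact ⟨rfl, rfl⟩
    | succ d ih =>
      intro k
      obtain ⟨hg, hp⟩ := ih k
      obtain ⟨hg', hp'⟩ := step (k + d)
      rw [show k + (d + 1) = k + d + 1 by omega]
      exact ⟨hg.trans hg', hp.trans hp'⟩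
  intro k l hk hkn hl hln
  rcases Nat.le_total k l with h | h
  · obtain ⟨hg, hp⟩ := main (l - k) k
    rw [show k + (l - k) = l by omega] at hg hp
    exact ⟨hg, hp⟩
  · obtain ⟨hg, hp⟩ := main (k - l) l
    rw [show l + (k - l) = k by omega] at hg hp
    exact ⟨hg.symm, hp.symm⟩
end

section
/- Let g_1, …, g_n be proper full fold automorphisms of F_r = FreeGroup (Fin r), where for each k the fold g_k sends x_{j_k} to x_{i_k}^{ε_k} · x_{j_k} or to x_{j_k} · x_{i_k}^{ε_k} and fixes all other basis elements. If q is an index with i_k ≠ q for every k (the letter x_q is never the introduced letter), then for every m ≠ q the reduced word of (g_n ∘ ⋯ ∘ g_1)(x_m) contains neither the letter x_q nor the letter x_q^{−1}; consequently the proper free factor Subgroup.closure {x_m : m ≠ q} of F_r is mapped into itself by g_n ∘ ⋯ ∘ g_1 (so if g_n ∘ ⋯ ∘ g_1 represents an irreducible train track map, every basis index occurs as an introduced index i_k for some k). -/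
/-- The free group `F_r` on the basis `x_1, …, x_r`. -/
abbrev FG (r : ℕ) := FreeGroup (Fin r)

/-- The group element corresponding to the letter `(i, b)`:
`x_i` if `b = true`, and `x_i⁻¹` if `b = false`. -/
def letter {r : ℕ} (x : Fin r × Bool) : FG r :=
  if x.2 then FreeGroup.of x.1 else (FreeGroup.of x.1)⁻¹

/-- `φ` is the proper full fold with introduced index `i`, folded index `j` and sign `ε`:
`φ (x j) = x_i^ε * x_j` or `φ (x j) = x_j * x_i^ε`, and `φ` fixes every other basis
element. -/
def IsFoldWith {r : ℕ} (φ : FG r →* FG r) (i j : Fin r) (ε : Bool) : Prop :=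
  i ≠ j ∧
    (φ (FreeGroup.of j) = letter (i, ε) * FreeGroup.of j ∨
      φ (FreeGroup.of j) = FreeGroup.of j * letter (i, ε)) ∧
    ∀ m : Fin r, m ≠ j → φ (FreeGroup.of m) = FreeGroup.of m

/-- `φ` is a proper full fold automorphism of `F_r`. -/
def IsProperFullFold {r : ℕ} (φ : FG r →* FG r) : Prop :=
  ∃ i j ε, IsFoldWith φ i j ε

/-- `φ` is cancellation-free on `w`: the length of the reduced word of `φ w` is the sum of
the lengths `ℓ (φ y)` over the letters `y` of the reduced word of `w`. -/
def CancellationFree {r : ℕ} (φ : FG r →* FG r) (w : FG r) : Prop :=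
  (φ w).toWord.length = (w.toWord.map fun y => (φ (letter y)).toWord.length).sum

/-- `foldComp G l k = G k ∘ G (k - 1) ∘ ⋯ ∘ G l` (the identity if `k + 1 ≤ l`). -/
def foldComp {r : ℕ} (G : ℕ → (FG r →* FG r)) (l k : ℕ) : FG r →* FG r :=
  (List.range (k + 1 - l)).foldl (fun acc t => (G (l + t)).comp acc) (MonoidHom.id _)

/-- `g` is a train track composition: for every `p ≥ 0` and every basis index `m`,
`g` is cancellation-free on `g^p (x m)`. -/
def IsTrainTrack {r : ℕ} (g : FG r →* FG r) : Prop :=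
  ∀ (p : ℕ) (m : Fin r), CancellationFree g ((⇑g)^[p] (FreeGroup.of m))


namespace Stmt9Aux

/-- The subgroup of words avoiding letter `q`. -/
def avoid (r : ℕ) (q : Fin r) : Subgroup (FG r) where
  carrier := {w | ∀ b : Bool, (q, b) ∉ w.toWord}
  one_mem' := by intro b; simp [FreeGroup.toWord_one]
  mul_mem' := by
    intro a c ha hc b hb
    have := (FreeGroup.toWord_mul_sublist a c).mem hb
    rcases List.mem_append.1 this with h | h
    · exact ha b h
    · exact hc b h
  inv_mem' := by
    intro a ha b hb
    rw [FreeGroup.toWord_inv] at hb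
    have : (q, !b) ∈ a.toWord := by
      simpa [FreeGroup.invRev] using hb
    exact ha _ this

theorem closure_le_avoid (r : ℕ) (q : Fin r) :
    Subgroup.closure {w : FG r | ∃ m : Fin r, m ≠ q ∧ w = FreeGroup.of m} ≤ avoid r q := by
  rw [Subgroup.closure_le]
  rintro w ⟨m, hm, rfl⟩ b hb
  rw [FreeGroup.toWord_of] at hb
  simp at hb
  exact hm hb.1.symm

end Stmt9Aux

/-- Let `G 1, …, G n` be proper full folds of `F_r`, where `G k` is the
fold with introduced index `idx k`, folded index `jdx k` and sign `ε k`.  If `q` is an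
index with `idx k ≠ q` for every `k` (the letter `x q` is never the introduced letter),
then for every `m ≠ q` the reduced word of `(G n ∘ ⋯ ∘ G 1) (x m)` contains neither the
letter `x q` nor the letter `x q⁻¹`; consequently the proper free factor generated by
`{x m : m ≠ q}` is mapped into itself by `G n ∘ ⋯ ∘ G 1`. -/
theorem stmt9 (r n : ℕ) (hn : 0 < n) (G : ℕ → (FG r →* FG r))
    (idx jdx : ℕ → Fin r) (ε : ℕ → Bool)
    (hfold : ∀ k, 1 ≤ k → k ≤ n → IsFoldWith (G k) (idx k) (jdx k) (ε k))
    (q : Fin r) (hq : ∀ k, 1 ≤ k → k ≤ n → idx k ≠ q) :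
    (∀ m : Fin r, m ≠ q → ∀ b : Bool,
        (q, b) ∉ ((foldComp G 1 n) (FreeGroup.of m)).toWord) ∧
      Subgroup.map (foldComp G 1 n)
          (Subgroup.closure {w : FG r | ∃ m : Fin r, m ≠ q ∧ w = FreeGroup.of m}) ≤
        Subgroup.closure {w : FG r | ∃ m : Fin r, m ≠ q ∧ w = FreeGroup.of m} := by
  set H := Subgroup.closure {w : FG r | ∃ m : Fin r, m ≠ q ∧ w = FreeGroup.of m} with hH
  have hgen : ∀ m : Fin r, m ≠ q → FreeGroup.of m ∈ H := fun m hm =>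
    Subgroup.subset_closure ⟨m, hm, rfl⟩
  have hletter : ∀ (i : Fin r) (b : Bool), i ≠ q → letter (i, b) ∈ H := by
    intro i b hi
    cases b
    · simpa [letter] using inv_mem (hgen i hi)
    · simpa [letter] using hgen i hi
  have hstep : ∀ k, 1 ≤ k → k ≤ n → ∀ w ∈ H, G k w ∈ H := by
    intro k hk1 hkn w hw
    have hmap : Subgroup.map (G k) H ≤ H := by
      rw [hH, MonoidHom.map_closure, Subgroup.closure_le]
      rintro _ ⟨_, ⟨m, hm, rfl⟩, rfl⟩
      obtain ⟨hij, hj, hfix⟩ := hfold k hk1 hkn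
      by_cases hmj : m = jdx k
      · subst hmj
        rcases hj with h | h <;> rw [h]
        · exact mul_mem (hletter _ _ (hq k hk1 hkn)) (hgen _ hm)
        · exact mul_mem (hgen _ hm) (hletter _ _ (hq k hk1 hkn))
      · rw [hfix m hmj]; exact hgen m hm
    exact hmap ⟨w, hw, rfl⟩
  have hcomp : ∀ k ≤ n, ∀ w ∈ H, foldComp G 1 k w ∈ H := by
    intro k
    induction k with
    | zero => intro _ w hw; simpa [foldComp] using hw
    | succ k ih =>
      intro hkn w hw
      have h1 : foldComp G 1 (k + 1) = (G (k + 1)).comp (foldComp G 1 k) := by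
        have h2 : k + 1 + 1 - 1 = (k + 1 - 1) + 1 := by omega
        simp only [foldComp, h2, List.range_succ, List.foldl_append,
          List.foldl_cons, List.foldl_nil]
        congr 2
        omega
      rw [h1]
      exact hstep (k + 1) (Nat.succ_le_succ (Nat.zero_le _)) hkn _
        (ih (Nat.le_of_succ_le hkn) w hw)
  constructor
  · intro m hm b
    exact Stmt9Aux.closure_le_avoid r q (hcomp n le_rfl _ (hgen m hm)) b
  · rintro _ ⟨w, hw, rfl⟩
    exact hcomp n le_rfl w hw
end
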